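/- Let h and k be integers with 3 ≤ h ≤ k. Then for every integer ℓ with k ≤ ℓ ≤ k + h, there exist finite simple graphs G and H such that χ_NL(G) = k, χ_NL(H) = h, and χ_NL(G + H) = ℓ, where G + H denotes the disjoint union of G and H. -/

import Mathlib

open SimpleGraph

/-- A coloring `c : V → Fin k` is a *neighbor-locating coloring* of `G` if it is proper and
any two distinct vertices with the same color have different sets of colors on their
open neighborhoods. -/
def IsNLColoring {V : Type*} (G : SimpleGraph V) {k : ℕ} (c : V → Fin k) : Prop :=
  (∀ u v : V, G.Adj u v → c u ≠ c v) ∧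
  ∀ u v : V, u ≠ v → c u = c v → c '' (G.neighborSet u) ≠ c '' (G.neighborSet v)

/-- The neighbor-locating chromatic number: the least `k` admitting an NL-coloring. -/
noncomputable def nlChromaticNumber {V : Type*} (G : SimpleGraph V) : ℕ :=
  sInf {k : ℕ | ∃ c : V → Fin k, IsNLColoring G c}

/-- clique on first `s` vertices plus `p` isolated vertices -/
def cU (s p : ℕ) : SimpleGraph (Fin (s + p)) where
  Adj u v := u ≠ v ∧ u.val < s ∧ v.val < s
  symm := ⟨fun _ _ ⟨h1, h2, h3⟩ => ⟨h1.symm, h3, h2⟩⟩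
  loopless := ⟨fun _ hu => hu.1 rfl⟩

lemma cU_adj {s p : ℕ} {u v : Fin (s + p)} :
    (cU s p).Adj u v ↔ u ≠ v ∧ u.val < s ∧ v.val < s := Iff.rfl

lemma nl_eq {V : Type*} (G : SimpleGraph V) (v : ℕ)
    (hub : ∃ c : V → Fin v, IsNLColoring G c)
    (hlb : ∀ j, (∃ c : V → Fin j, IsNLColoring G c) → v ≤ j) :
    nlChromaticNumber G = v :=
  le_antisymm (Nat.sInf_le hub) (le_csInf ⟨v, hub⟩ hlb)

lemma iso_ne {V : Type*} {G : SimpleGraph V} {t : ℕ} {c : V → Fin t}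
    (hc : IsNLColoring G c) {u v : V} (hu : G.neighborSet u = ∅)
    (hv : G.neighborSet v = ∅) (huv : u ≠ v) : c u ≠ c v :=
  fun he => hc.2 u v huv he (by rw [hu, hv])

lemma ne_of_mem_not_mem {α : Type*} {S T : Set α} {x : α} (hx : x ∈ S) (hx' : x ∉ T) :
    S ≠ T := fun h => hx' (h ▸ hx)

lemma cU_iso {s p : ℕ} {u : Fin (s + p)} (hu : ¬ u.val < s) :
    (cU s p).neighborSet u = ∅ := by
  ext w
  simp only [mem_neighborSet, Set.mem_empty_iff_false, iff_false, cU_adj]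
  rintro ⟨-, h2, -⟩
  exact hu h2

lemma cU_nbr {s p : ℕ} (hs : 2 ≤ s) {u : Fin (s + p)} (hu : u.val < s) :
    ∃ w, (cU s p).Adj u w ∧ w.val = (if u.val = 0 then 1 else 0) := by
  refine ⟨⟨if u.val = 0 then 1 else 0, by split <;> omega⟩, ⟨?_, hu, by dsimp; split <;> omega⟩, rfl⟩
  intro hq
  have := congrArg Fin.val hq
  dsimp at this
  split at this <;> omega

/-- the standard coloring of `cU s p` -/
def col (s p t : ℕ) (ht : s ≤ t ∧ p ≤ t) : Fin (s + p) → Fin t := fun u =>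
  ⟨if u.val < s then u.val else u.val - s, by have := u.isLt; split <;> omega⟩

lemma col_val {s p t : ℕ} {ht} (u : Fin (s + p)) :
    (col s p t ht u).val = if u.val < s then u.val else u.val - s := rfl

lemma col_NL {s p t : ℕ} (hs : 2 ≤ s) (ht : s ≤ t ∧ p ≤ t) :
    IsNLColoring (cU s p) (col s p t ht) := by
  constructor
  · rintro u v ⟨h1, h2, h3⟩ he
    have := congrArg Fin.val he
    rw [col_val, col_val, if_pos h2, if_pos h3] at this
    exact h1 (Fin.ext this)
  · intro u v huv he
    have hev := congrArg Fin.val he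
    rw [col_val, col_val] at hev
    by_cases hu : u.val < s <;> by_cases hv : v.val < s
    · rw [if_pos hu, if_pos hv] at hev
      exact absurd (Fin.ext hev) huv
    · obtain ⟨w, hw, -⟩ := cU_nbr hs hu
      refine ne_of_mem_not_mem ⟨w, hw, rfl⟩ ?_
      rw [cU_iso hv]
      simp
    · obtain ⟨w, hw, -⟩ := cU_nbr hs hv
      have hm : col s p t ht w ∈ col s p t ht '' ((cU s p).neighborSet v) := ⟨w, hw, rfl⟩
      intro himg
      rw [← himg, cU_iso hu] at hm
      simp at hm
    · rw [if_neg hu, if_neg hv] at hev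
      have := u.isLt; have := v.isLt
      exact absurd (Fin.ext (show u.val = v.val by omega)) huv

lemma cU_lb {s p j : ℕ} (c : Fin (s + p) → Fin j) (hc : IsNLColoring (cU s p) c) :
    max s p ≤ j := by
  have h1 : s ≤ j := by
    have hinj : Function.Injective (fun i : Fin s => c ⟨i.val, by omega⟩) := by
      intro i1 i2 he
      by_contra hne
      refine hc.1 ⟨i1.val, by omega⟩ ⟨i2.val, by omega⟩ ⟨?_, i1.isLt, i2.isLt⟩ he
      intro hq
      have hq' := congrArg Fin.val hq
      simp only [] at hq'
      exact hne (Fin.ext hq')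
    simpa using Fintype.card_le_of_injective _ hinj
  have h2 : p ≤ j := by
    have hinj : Function.Injective (fun i : Fin p => c ⟨s + i.val, by omega⟩) := by
      intro i1 i2 he
      by_contra hne
      refine iso_ne hc (cU_iso (by simp)) (cU_iso (by simp)) ?_ he
      intro hq
      have hq' := congrArg Fin.val hq
      simp only [] at hq'
      exact hne (Fin.ext (by omega))
    simpa using Fintype.card_le_of_injective _ hinj
  omega

lemma cU_nl (s p : ℕ) (hs : 2 ≤ s) : nlChromaticNumber (cU s p) = max s p :=
  nl_eq _ _ ⟨col s p (max s p) ⟨le_max_left s p, le_max_right s p⟩, col_NL hs _⟩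
    (fun _ ⟨c, hc⟩ => cU_lb c hc)

section SumCase

variable {h k p : ℕ}

lemma sadj_ll {α β : Type*} {G : SimpleGraph α} {H : SimpleGraph β} {u v : α} :
    (G ⊕g H).Adj (Sum.inl u) (Sum.inl v) ↔ G.Adj u v := by simp

lemma sadj_rr {α β : Type*} {G : SimpleGraph α} {H : SimpleGraph β} {u v : β} :
    (G ⊕g H).Adj (Sum.inr u) (Sum.inr v) ↔ H.Adj u v := by simp

lemma sadj_lr {α β : Type*} {G : SimpleGraph α} {H : SimpleGraph β} {u : α} {v : β} :
    ¬ (G ⊕g H).Adj (Sum.inl u) (Sum.inr v) := by simp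

lemma sadj_rl {α β : Type*} {G : SimpleGraph α} {H : SimpleGraph β} {u : β} {v : α} :
    ¬ (G ⊕g H).Adj (Sum.inr u) (Sum.inl v) := by simp

/-- the coloring of `cU k p ⊕g cU (h-1) h` with `p + h` colors -/
def colS (k p h : ℕ) (hh : 3 ≤ h) (hk : h ≤ k) (hkp : k ≤ p + h) :
    Fin (k + p) ⊕ Fin ((h - 1) + h) → Fin (p + h)
  | Sum.inl u => ⟨if u.val < k then u.val else u.val - k, by have := u.isLt; split <;> omega⟩
  | Sum.inr u => ⟨if u.val < h - 1 then u.val else p + (u.val - (h - 1)),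
      by have := u.isLt; split <;> omega⟩

lemma colS_l {hh hk hkp} (u : Fin (k + p)) :
    (colS k p h hh hk hkp (Sum.inl u)).val = if u.val < k then u.val else u.val - k := rfl

lemma colS_r {hh hk hkp} (u : Fin ((h - 1) + h)) :
    (colS k p h hh hk hkp (Sum.inr u)).val =
      if u.val < h - 1 then u.val else p + (u.val - (h - 1)) := rfl

lemma sum_iso_l {u : Fin (k + p)} (hu : ¬ u.val < k) :
    (cU k p ⊕g cU (h - 1) h).neighborSet (Sum.inl u) = ∅ := by
  ext w
  cases w with
  | inl w =>
      simp only [mem_neighborSet, sum_adj, Set.mem_empty_iff_false, iff_false, cU_adj]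
      rintro ⟨-, h2, -⟩
      exact hu h2
  | inr w => simp [sum_adj]

lemma sum_iso_r {u : Fin ((h - 1) + h)} (hu : ¬ u.val < h - 1) :
    (cU k p ⊕g cU (h - 1) h).neighborSet (Sum.inr u) = ∅ := by
  ext w
  cases w with
  | inl w => simp [sum_adj]
  | inr w =>
      simp only [mem_neighborSet, sum_adj, Set.mem_empty_iff_false, iff_false, cU_adj]
      rintro ⟨-, h2, -⟩
      exact hu h2

lemma colS_NL (hh : 3 ≤ h) (hk : h ≤ k) (hkp : k ≤ p + h) :
    IsNLColoring (cU k p ⊕g cU (h - 1) h) (colS k p h hh hk hkp) := by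
  set c := colS k p h hh hk hkp with hc
  constructor
  · rintro (u | u) (v | v) hadj he
    · have h1 := sadj_ll.mp hadj
      rw [cU_adj] at h1
      have := congrArg Fin.val he
      rw [hc, colS_l, colS_l, if_pos h1.2.1, if_pos h1.2.2] at this
      exact h1.1 (Fin.ext this)
    · exact sadj_lr hadj
    · exact sadj_rl hadj
    · have h1 := sadj_rr.mp hadj
      rw [cU_adj] at h1
      have := congrArg Fin.val he
      rw [hc, colS_r, colS_r, if_pos h1.2.1, if_pos h1.2.2] at this
      exact h1.1 (Fin.ext this)
  · rintro (u | u) (v | v) huv he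
    · -- both left
      have hev := congrArg Fin.val he
      rw [hc, colS_l, colS_l] at hev
      by_cases hu : u.val < k <;> by_cases hv : v.val < k
      · rw [if_pos hu, if_pos hv] at hev
        exact absurd (congrArg Sum.inl (Fin.ext hev)) huv
      · obtain ⟨w, hw, -⟩ := cU_nbr (show 2 ≤ k by omega) hu
        have hm : c (Sum.inl w) ∈ c '' ((cU k p ⊕g cU (h-1) h).neighborSet (Sum.inl u)) :=
          ⟨Sum.inl w, (sadj_ll (G := cU k p) (H := cU (h-1) h)).mpr hw, rfl⟩
        intro himg
        rw [himg, sum_iso_l hv] at hm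
        simp at hm
      · obtain ⟨w, hw, -⟩ := cU_nbr (show 2 ≤ k by omega) hv
        have hm : c (Sum.inl w) ∈ c '' ((cU k p ⊕g cU (h-1) h).neighborSet (Sum.inl v)) :=
          ⟨Sum.inl w, (sadj_ll (G := cU k p) (H := cU (h-1) h)).mpr hw, rfl⟩
        intro himg
        rw [← himg, sum_iso_l hu] at hm
        simp at hm
      · rw [if_neg hu, if_neg hv] at hev
        have := u.isLt; have := v.isLt
        exact absurd (congrArg Sum.inl (Fin.ext (show u.val = v.val by omega))) huv
    · -- u left, v right
      have hev := congrArg Fin.val he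
      rw [hc, colS_l, colS_r] at hev
      by_cases hu : u.val < k <;> by_cases hv : v.val < h - 1
      · -- left clique vs right clique
        rw [if_pos hu, if_pos hv] at hev
        have huv' : u.val < h - 1 := by omega
        have hwadj : (cU k p ⊕g cU (h-1) h).Adj (Sum.inl u) (Sum.inl ⟨h - 1, by omega⟩) := by
          rw [sadj_ll, cU_adj]
          refine ⟨?_, hu, by dsimp; omega⟩
          intro hq
          have := congrArg Fin.val hq
          dsimp at this
          omega
        refine ne_of_mem_not_mem ⟨Sum.inl ⟨h - 1, by omega⟩, hwadj, rfl⟩ ?_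
        rintro ⟨(w | w), hw, hwc⟩
        · rw [mem_neighborSet] at hw
          exact sadj_rl hw
        · rw [mem_neighborSet] at hw
          have hw' := sadj_rr.mp hw
          rw [cU_adj] at hw'
          have hval := congrArg Fin.val hwc
          rw [hc, colS_r, if_pos hw'.2.2, colS_l] at hval
          have hmk : ((⟨h - 1, by omega⟩ : Fin (k + p))).val = h - 1 := rfl
          rw [hmk, if_pos (show h - 1 < k by omega)] at hval
          omega
      · -- left clique vs right iso
        obtain ⟨w, hw, -⟩ := cU_nbr (show 2 ≤ k by omega) hu
        have hm : c (Sum.inl w) ∈ c '' ((cU k p ⊕g cU (h-1) h).neighborSet (Sum.inl u)) :=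
          ⟨Sum.inl w, (sadj_ll (G := cU k p) (H := cU (h-1) h)).mpr hw, rfl⟩
        intro himg
        rw [himg, sum_iso_r hv] at hm
        simp at hm
      · -- left iso vs right clique
        obtain ⟨w, hw, -⟩ := cU_nbr (show 2 ≤ h - 1 by omega) hv
        have hm : c (Sum.inr w) ∈ c '' ((cU k p ⊕g cU (h-1) h).neighborSet (Sum.inr v)) :=
          ⟨Sum.inr w, (sadj_rr (G := cU k p) (H := cU (h-1) h)).mpr hw, rfl⟩
        intro himg
        rw [← himg, sum_iso_l hu] at hm
        simp at hm
      · -- left iso vs right iso : colors differ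
        rw [if_neg hu, if_neg hv] at hev
        have := u.isLt
        omega
    · -- u right, v left : symmetric
      have hev := congrArg Fin.val he
      rw [hc, colS_r, colS_l] at hev
      by_cases hu : u.val < h - 1 <;> by_cases hv : v.val < k
      · rw [if_pos hu, if_pos hv] at hev
        have hwadj : (cU k p ⊕g cU (h-1) h).Adj (Sum.inl v) (Sum.inl ⟨h - 1, by omega⟩) := by
          rw [sadj_ll, cU_adj]
          refine ⟨?_, hv, by dsimp; omega⟩
          intro hq
          have := congrArg Fin.val hq
          dsimp at this
          omega
        refine Ne.symm (ne_of_mem_not_mem ⟨Sum.inl ⟨h - 1, by omega⟩, hwadj, rfl⟩ ?_)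
        rintro ⟨(w | w), hw, hwc⟩
        · rw [mem_neighborSet] at hw
          exact sadj_rl hw
        · rw [mem_neighborSet] at hw
          have hw' := sadj_rr.mp hw
          rw [cU_adj] at hw'
          have hval := congrArg Fin.val hwc
          rw [hc, colS_r, if_pos hw'.2.2, colS_l] at hval
          have hmk : ((⟨h - 1, by omega⟩ : Fin (k + p))).val = h - 1 := rfl
          rw [hmk, if_pos (show h - 1 < k by omega)] at hval
          omega
      · obtain ⟨w, hw, -⟩ := cU_nbr (show 2 ≤ h - 1 by omega) hu
        have hm : c (Sum.inr w) ∈ c '' ((cU k p ⊕g cU (h-1) h).neighborSet (Sum.inr u)) :=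
          ⟨Sum.inr w, (sadj_rr (G := cU k p) (H := cU (h-1) h)).mpr hw, rfl⟩
        intro himg
        rw [himg, sum_iso_l hv] at hm
        simp at hm
      · obtain ⟨w, hw, -⟩ := cU_nbr (show 2 ≤ k by omega) hv
        have hm : c (Sum.inl w) ∈ c '' ((cU k p ⊕g cU (h-1) h).neighborSet (Sum.inl v)) :=
          ⟨Sum.inl w, (sadj_ll (G := cU k p) (H := cU (h-1) h)).mpr hw, rfl⟩
        intro himg
        rw [← himg, sum_iso_r hu] at hm
        simp at hm
      · rw [if_neg hu, if_neg hv] at hev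
        have := v.isLt
        omega
    · -- both right
      have hev := congrArg Fin.val he
      rw [hc, colS_r, colS_r] at hev
      by_cases hu : u.val < h - 1 <;> by_cases hv : v.val < h - 1
      · rw [if_pos hu, if_pos hv] at hev
        exact absurd (congrArg Sum.inr (Fin.ext hev)) huv
      · obtain ⟨w, hw, -⟩ := cU_nbr (show 2 ≤ h - 1 by omega) hu
        have hm : c (Sum.inr w) ∈ c '' ((cU k p ⊕g cU (h-1) h).neighborSet (Sum.inr u)) :=
          ⟨Sum.inr w, (sadj_rr (G := cU k p) (H := cU (h-1) h)).mpr hw, rfl⟩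
        intro himg
        rw [himg, sum_iso_r hv] at hm
        simp at hm
      · obtain ⟨w, hw, -⟩ := cU_nbr (show 2 ≤ h - 1 by omega) hv
        have hm : c (Sum.inr w) ∈ c '' ((cU k p ⊕g cU (h-1) h).neighborSet (Sum.inr v)) :=
          ⟨Sum.inr w, (sadj_rr (G := cU k p) (H := cU (h-1) h)).mpr hw, rfl⟩
        intro himg
        rw [← himg, sum_iso_r hu] at hm
        simp at hm
      · rw [if_neg hu, if_neg hv] at hev
        have := u.isLt; have := v.isLt
        exact absurd (congrArg Sum.inr (Fin.ext (show u.val = v.val by omega))) huv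

lemma sum_lb (hh : 3 ≤ h) {j : ℕ} (c : Fin (k + p) ⊕ Fin ((h - 1) + h) → Fin j)
    (hc : IsNLColoring (cU k p ⊕g cU (h - 1) h) c) : p + h ≤ j := by
  have hinj : Function.Injective (fun i : Fin (p + h) =>
      if hi : i.val < p then c (Sum.inl ⟨k + i.val, by omega⟩)
      else c (Sum.inr ⟨(h - 1) + (i.val - p), by have := i.isLt; omega⟩)) := by
    intro i1 i2 he
    dsimp only at he
    by_cases h1 : i1.val < p <;> by_cases h2 : i2.val < p
    · rw [dif_pos h1, dif_pos h2] at he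
      by_contra hne
      refine iso_ne hc (sum_iso_l (by simp)) (sum_iso_l (by simp)) ?_ he
      intro hq
      have := congrArg Fin.val (Sum.inl.inj hq)
      simp only [] at this
      exact hne (Fin.ext (by omega))
    · rw [dif_pos h1, dif_neg h2] at he
      exact absurd he (iso_ne hc (sum_iso_l (by simp)) (sum_iso_r (by simp)) (by simp))
    · rw [dif_neg h1, dif_pos h2] at he
      exact absurd he (iso_ne hc (sum_iso_r (by simp)) (sum_iso_l (by simp)) (by simp))
    · rw [dif_neg h1, dif_neg h2] at he
      by_contra hne
      refine iso_ne hc (sum_iso_r (by simp)) (sum_iso_r (by simp)) ?_ he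
      intro hq
      have := congrArg Fin.val (Sum.inr.inj hq)
      simp only [] at this
      exact hne (Fin.ext (by omega))
  simpa using Fintype.card_le_of_injective _ hinj

end SumCase

/-- For `3 ≤ h ≤ k` and every `ℓ` with `k ≤ ℓ ≤ k + h`, there are graphs `G` and `H` with
`χ_NL(G) = k`, `χ_NL(H) = h` and `χ_NL(G + H) = ℓ`. -/
theorem exists_graphs_nlChromaticNumber_sum_eq
    (h k : ℕ) (hh : 3 ≤ h) (hk : h ≤ k) :
    ∀ ℓ : ℕ, k ≤ ℓ → ℓ ≤ k + h →
      ∃ (n m : ℕ) (G : SimpleGraph (Fin n)) (H : SimpleGraph (Fin m)),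
        nlChromaticNumber G = k ∧ nlChromaticNumber H = h ∧
        nlChromaticNumber (G ⊕g H) = ℓ := by
  intro ℓ hl1 hl2
  set p := ℓ - h with hp
  refine ⟨k + p, (h - 1) + h, cU k p, cU (h - 1) h, ?_, ?_, ?_⟩
  · rw [cU_nl k p (by omega)]
    omega
  · rw [cU_nl (h - 1) h (by omega)]
    omega
  · have : nlChromaticNumber (cU k p ⊕g cU (h - 1) h) = p + h := by
      refine nl_eq _ _ ⟨colS k p h hh hk (by omega), colS_NL hh hk (by omega)⟩ ?_
      rintro j ⟨c, hc⟩
      exact sum_lb hh c hc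
    rw [this]
    omega
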